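/- Potential-based reward shaping preserves optimal Q-values up to the potential: in a finite MDP with reward r, discount γ ∈ [0,1), and bounded potential Φ : S → ℝ, define r̃(s,a) = r(s,a) + γ·E_{s'∼P(·|s,a)}[Φ(s')] − Φ(s). Then the optimal action-value functions satisfy Q̃*(s,a) = Q*(s,a) − Φ(s) for all (s,a). -/
import Mathlib

lemma abs_ciSup_sub_ciSup_le {A : Type*} [Fintype A] [Nonempty A]
    (f g : A → ℝ) (M : ℝ) (h : ∀ a, |f a - g a| ≤ M) :
    |(⨆ a, f a) - ⨆ a, g a| ≤ M := by
  have hbf : BddAbove (Set.range f) := Set.Finite.bddAbove (Set.finite_range f)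
  have hbg : BddAbove (Set.range g) := Set.Finite.bddAbove (Set.finite_range g)
  rw [abs_le]
  constructor
  · have : (⨆ a, g a) ≤ M + ⨆ a, f a := by
      apply ciSup_le
      intro a
      have := (abs_le.mp (h a)).1
      have hf := le_ciSup hbf a
      linarith
    linarith
  · have : (⨆ a, f a) ≤ M + ⨆ a, g a := by
      apply ciSup_le
      intro a
      have := (abs_le.mp (h a)).2
      have hg := le_ciSup hbg a
      linarith
    linarith


/-- Potential-based reward shaping preserves optimal Q-values up to the potential:
if `Qstar` is a fixed point of the optimal Bellman operator with reward `r`, and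
`Qtilde` is a fixed point of the optimal Bellman operator with shaped reward
`r̃(s,a) = r(s,a) + γ·E[Φ(s')] − Φ(s)`, then `Qtilde = Qstar − Φ`. -/
theorem pbrs_optimal_q_shift {S A : Type*} [Fintype S] [Nonempty S] [Fintype A] [Nonempty A]
    (r : S → A → ℝ) (γ : ℝ) (hγ0 : 0 ≤ γ) (hγ1 : γ < 1)
    (P : S → A → S → ℝ) (hP0 : ∀ s a s', 0 ≤ P s a s') (hP1 : ∀ s a, ∑ s', P s a s' = 1)
    (Φ : S → ℝ)
    (Qstar Qtilde : S → A → ℝ)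
    (hQstar : ∀ s a, Qstar s a = r s a + γ * ∑ s', P s a s' * ⨆ a' : A, Qstar s' a')
    (hQtilde : ∀ s a, Qtilde s a =
      (r s a + γ * (∑ s', P s a s' * Φ s') - Φ s)
        + γ * ∑ s', P s a s' * ⨆ a' : A, Qtilde s' a') :
    ∀ s a, Qtilde s a = Qstar s a - Φ s := by
  set D : S → A → ℝ := fun s a => Qtilde s a - (Qstar s a - Φ s) with hD
  -- pick a maximizer of |D|
  obtain ⟨p, -, hp⟩ := Finset.exists_max_image (Finset.univ : Finset (S × A))
    (fun q => |D q.1 q.2|) ⟨Classical.arbitrary _, Finset.mem_univ _⟩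
  set M : ℝ := |D p.1 p.2| with hM
  have hMnonneg : 0 ≤ M := abs_nonneg _
  -- shifted supremum identity
  have hshift : ∀ (s' : S), (⨆ a' : A, (Qstar s' a' - Φ s')) = (⨆ a' : A, Qstar s' a') - Φ s' := by
    intro s'
    have hb : BddAbove (Set.range (Qstar s')) := Set.Finite.bddAbove (Set.finite_range _)
    apply le_antisymm
    · apply ciSup_le
      intro a
      have := le_ciSup hb a
      linarith
    · rw [sub_le_iff_le_add]
      apply ciSup_le
      intro a
      have hb2 : BddAbove (Set.range (fun a' : A => Qstar s' a' - Φ s')) :=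
        Set.Finite.bddAbove (Set.finite_range _)
      have := le_ciSup hb2 a
      linarith
  -- key recursion for D
  have hDrec : ∀ s a, D s a =
      γ * ∑ s', P s a s' * ((⨆ a' : A, Qtilde s' a') - ((⨆ a' : A, Qstar s' a') - Φ s')) := by
    intro s a
    have h1 := hQstar s a
    have h2 := hQtilde s a
    simp only [hD]
    rw [h1, h2]
    have : ∀ s', P s a s' * ((⨆ a' : A, Qtilde s' a') - ((⨆ a' : A, Qstar s' a') - Φ s'))
        = P s a s' * (⨆ a' : A, Qtilde s' a') - P s a s' * (⨆ a' : A, Qstar s' a')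
          + P s a s' * Φ s' := by intro s'; ring
    simp only [this]
    rw [Finset.sum_add_distrib, Finset.sum_sub_distrib]
    ring
  -- contraction bound
  have hbound : ∀ s a, |D s a| ≤ γ * M := by
    intro s a
    rw [hDrec s a, abs_mul, abs_of_nonneg hγ0]
    apply mul_le_mul_of_nonneg_left _ hγ0
    calc |∑ s', P s a s' * ((⨆ a' : A, Qtilde s' a') - ((⨆ a' : A, Qstar s' a') - Φ s'))|
        ≤ ∑ s', |P s a s' * ((⨆ a' : A, Qtilde s' a') - ((⨆ a' : A, Qstar s' a') - Φ s'))| :=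
          Finset.abs_sum_le_sum_abs _ _
      _ ≤ ∑ s', P s a s' * M := by
          apply Finset.sum_le_sum
          intro s' _
          rw [abs_mul, abs_of_nonneg (hP0 s a s')]
          apply mul_le_mul_of_nonneg_left _ (hP0 s a s')
          rw [← hshift s']
          apply abs_ciSup_sub_ciSup_le
          intro a'
          have := hp (s', a') (Finset.mem_univ _)
          simpa [hD] using this
      _ = M := by rw [← Finset.sum_mul, hP1 s a, one_mul]
  have hM0 : M ≤ 0 := by
    have := hbound p.1 p.2
    rw [← hM] at this
    nlinarith
  intro s a
  have h := hbound s a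
  have : |D s a| ≤ 0 := le_trans h (by nlinarith)
  have := abs_nonneg (D s a)
  have hzero : D s a = 0 := abs_eq_zero.mp (le_antisymm ‹|D s a| ≤ 0› ‹0 ≤ |D s a|›)
  simp only [hD] at hzero
  linarith
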